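/- arXiv:2402.07546 — 2 statements merged into one kernel-verified Lean document; each statement's English description precedes it below -/
import Mathlib

section
/- Let L > 0 and u(x) = -c · cos(πx/L) for a constant c > 0 on Ω = [-L, L]. If V : [-L, L] → ℝ is even and strictly decreasing on [0, L], then ∫_{-L}^{L} u(x) V(x) dx < 0. -/
open Real intervalIntegral

theorem stmt_12 (L c : ℝ) (hL : 0 < L) (hc : 0 < c)
    (u : ℝ → ℝ) (hu : ∀ x, u x = -c * Real.cos (π * x / L))
    (V : ℝ → ℝ) (hVcont : ContinuousOn V (Set.Icc (-L) L))
    (hVeven : ∀ x, V (-x) = V x)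
    (hVdec : StrictAntiOn V (Set.Icc (0:ℝ) L)) :
    ∫ x in (-L)..L, u x * V x < 0 := by
  have hL0 : L ≠ 0 := ne_of_gt hL
  set f : ℝ → ℝ := fun x => Real.cos (π * x / L) * V x with hf
  have hfc : ContinuousOn f (Set.Icc (-L) L) := by
    apply ContinuousOn.mul _ hVcont
    fun_prop
  have hfeven : ∀ x, f (-x) = f x := by
    intro x
    simp [hf, mul_neg, neg_div, Real.cos_neg, hVeven]
  have hint : ∀ a b : ℝ, a ∈ Set.Icc (-L) L → b ∈ Set.Icc (-L) L →
      IntervalIntegrable f MeasureTheory.volume a b := by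
    intro a b ha hb
    exact (hfc.mono (Set.uIcc_subset_Icc ha hb)).intervalIntegrable
  have hmem0 : (0:ℝ) ∈ Set.Icc (-L) L := by constructor <;> linarith
  have hmemL : L ∈ Set.Icc (-L) L := by constructor <;> linarith
  have hmemnL : -L ∈ Set.Icc (-L) L := by constructor <;> linarith
  have hmemL2 : L/2 ∈ Set.Icc (-L) L := by constructor <;> linarith
  -- symmetry
  have h1 : ∫ x in (-L)..(0:ℝ), f x = ∫ x in (0:ℝ)..L, f x := by
    calc ∫ x in (-L)..(0:ℝ), f x = ∫ x in (-L)..(-0:ℝ), f x := by norm_num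
      _ = ∫ x in (0:ℝ)..L, f (-x) := (intervalIntegral.integral_comp_neg f).symm
      _ = ∫ x in (0:ℝ)..L, f x := by simp_rw [hfeven]
  have h2 : ∫ x in (-L)..L, f x = 2 * ∫ x in (0:ℝ)..L, f x := by
    rw [← intervalIntegral.integral_add_adjacent_intervals
      (hint (-L) 0 hmemnL hmem0) (hint 0 L hmem0 hmemL), h1]
    ring
  -- reflection
  have h4 : ∫ x in (L/2)..L, f x = ∫ x in (0:ℝ)..(L/2), f (L - x) := by
    rw [intervalIntegral.integral_comp_sub_left f L]
    congr 1 <;> ring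
  have hintr : IntervalIntegrable (fun x => f (L - x)) MeasureTheory.volume 0 (L/2) := by
    apply ContinuousOn.intervalIntegrable
    apply hfc.comp (Continuous.continuousOn (by fun_prop))
    intro x hx
    rw [Set.uIcc_of_le (by linarith)] at hx
    constructor
    · simp only [Set.mem_Icc] at hx; linarith [hx.1, hx.2]
    · simp only [Set.mem_Icc] at hx; linarith [hx.1, hx.2]
  have h3 : ∫ x in (0:ℝ)..L, f x
      = ∫ x in (0:ℝ)..(L/2), (f x + f (L - x)) := by
    rw [← intervalIntegral.integral_add_adjacent_intervals
      (hint 0 (L/2) hmem0 hmemL2) (hint (L/2) L hmemL2 hmemL), h4,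
      intervalIntegral.integral_add (hint 0 (L/2) hmem0 hmemL2) hintr]
  -- integrand identity
  have hgid : ∀ x, f x + f (L - x)
      = Real.cos (π * x / L) * (V x - V (L - x)) := by
    intro x
    have hcos : Real.cos (π * (L - x) / L) = -Real.cos (π * x / L) := by
      have : π * (L - x) / L = π - π * x / L := by field_simp
      rw [this, Real.cos_pi_sub]
    simp only [hf, hcos]
    ring
  have hgint : IntervalIntegrable
      (fun x => Real.cos (π * x / L) * (V x - V (L - x)))
      MeasureTheory.volume 0 (L/2) := by
    have := (hint 0 (L/2) hmem0 hmemL2).add hintr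
    apply this.congr
    intro x _
    exact hgid x
  -- positivity
  have hpos : 0 < ∫ x in (0:ℝ)..(L/2),
      Real.cos (π * x / L) * (V x - V (L - x)) := by
    apply intervalIntegral.intervalIntegral_pos_of_pos_on hgint
    · intro x hx
      obtain ⟨hx0, hx1⟩ := hx
      have hcospos : 0 < Real.cos (π * x / L) := by
        apply Real.cos_pos_of_mem_Ioo
        constructor
        · have : 0 < π * x / L := by positivity
          linarith [pi_pos]
        · rw [div_lt_iff₀ hL]
          nlinarith [pi_pos]
      have hVpos : 0 < V x - V (L - x) := by
        have hmx : x ∈ Set.Icc (0:ℝ) L := ⟨le_of_lt hx0, by linarith⟩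
        have hmLx : L - x ∈ Set.Icc (0:ℝ) L := ⟨by linarith, by linarith⟩
        have := hVdec hmx hmLx (by linarith)
        linarith
      positivity
    · linarith
  have hkey : 0 < ∫ x in (-L)..L, f x := by
    rw [h2, h3]
    have : ∫ x in (0:ℝ)..(L/2), (f x + f (L - x))
        = ∫ x in (0:ℝ)..(L/2), Real.cos (π * x / L) * (V x - V (L - x)) := by
      apply intervalIntegral.integral_congr
      intro x _
      exact hgid x
    rw [this]
    linarith
  have heq : ∫ x in (-L)..L, u x * V x = -c * ∫ x in (-L)..L, f x := by
    rw [← intervalIntegral.integral_const_mul]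
    apply intervalIntegral.integral_congr
    intro x _
    simp only [hu, hf]
    ring
  rw [heq]
  nlinarith
end

section
/- Let u, P : [0,∞) → ℝ satisfy the ODE system V' = V − V² − h P V, P' = P − P² + γ h P V with (γ − 1)h = −2, and set u = V + P with u(0) = V₀ + P₀ > 0. Then u satisfies the logistic equation u' = u − u², hence u(t) = 1 / (1 + (1/(V₀+P₀) − 1) e^{−t}) for all t ≥ 0. -/
open Real

theorem stmt_15 (h γ : ℝ) (hh : 0 < h) (hγ : 0 ≤ γ) (hrel : (γ - 1) * h = -2)
    (V P : ℝ → ℝ)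
    (hVpos : ∀ t ≥ (0:ℝ), 0 ≤ V t) (hPpos : ∀ t ≥ (0:ℝ), 0 ≤ P t)
    (hVode : ∀ t ≥ (0:ℝ), HasDerivAt V (V t - (V t)^2 - h * P t * V t) t)
    (hPode : ∀ t ≥ (0:ℝ), HasDerivAt P (P t - (P t)^2 + γ * h * P t * V t) t)
    (u : ℝ → ℝ) (hu : ∀ t, u t = V t + P t) (hu0 : 0 < u 0) :
    (∀ t ≥ (0:ℝ), HasDerivAt u (u t - (u t)^2) t) ∧
    (∀ t ≥ (0:ℝ), u t = 1 / (1 + (1 / (V 0 + P 0) - 1) * Real.exp (-t))) := by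
  have hueq : u = fun s => V s + P s := funext hu
  subst hueq
  have hgh : γ * h = h - 2 := by nlinarith [hrel]
  have part1 : ∀ t ≥ (0:ℝ), HasDerivAt (fun s => V s + P s)
      ((V t + P t) - (V t + P t)^2) t := by
    intro t ht
    have h1 := (hVode t ht).add (hPode t ht)
    refine h1.congr_deriv ?_
    rw [hgh]
    ring
  refine ⟨part1, ?_⟩
  -- part 2
  have hu0' : (0:ℝ) < V 0 + P 0 := hu0
  obtain ⟨c₀, hc₀⟩ : ∃ c : ℝ, c = 1 / (V 0 + P 0) - 1 := ⟨_, rfl⟩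
  have hc₀1 : 1 + c₀ = 1 / (V 0 + P 0) := by rw [hc₀]; ring
  have hDpos : ∀ s ≥ (0:ℝ), 0 < 1 + c₀ * Real.exp (-s) := by
    intro s hs
    have he1 : Real.exp (-s) ≤ 1 := Real.exp_le_one_iff.mpr (by linarith)
    have he0 : 0 < Real.exp (-s) := Real.exp_pos _
    rcases le_or_gt 0 c₀ with hc | hc
    · nlinarith
    · have h1 : c₀ ≤ c₀ * Real.exp (-s) := by nlinarith
      have h2 : (0:ℝ) < 1 / (V 0 + P 0) := by positivity
      linarith
  set f : ℝ → ℝ := fun s => (1 + c₀ * Real.exp (-s))⁻¹ with hf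
  have hfderiv : ∀ s ≥ (0:ℝ), HasDerivAt f (f s - (f s)^2) s := by
    intro s hs
    have hD : HasDerivAt (fun x => 1 + c₀ * Real.exp (-x)) (c₀ * (Real.exp (-s) * (-1))) s := by
      exact ((((hasDerivAt_id s).neg).exp).const_mul c₀).const_add 1
    have hDne : (1 + c₀ * Real.exp (-s)) ≠ 0 := ne_of_gt (hDpos s hs)
    have := hD.inv hDne
    refine this.congr_deriv ?_
    simp only [hf]
    field_simp
    ring
  have hf0 : f 0 = V 0 + P 0 := by
    simp only [hf, neg_zero, Real.exp_zero, mul_one, hc₀1]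
    rw [one_div, inv_inv]
  intro t ht
  -- apply Gronwall on [0, t] to g = u - f
  set g : ℝ → ℝ := fun s => (V s + P s) - f s with hg
  have hgc : ContinuousOn g (Set.Icc 0 t) := by
    intro s hs
    exact (((part1 s hs.1).sub (hfderiv s hs.1)).continuousAt).continuousWithinAt
  have hucont : ContinuousOn (fun s => (V s + P s) + f s) (Set.Icc 0 t) := by
    intro s hs
    exact (((part1 s hs.1).add (hfderiv s hs.1)).continuousAt).continuousWithinAt
  obtain ⟨K, hK⟩ := (isCompact_Icc (a := (0:ℝ)) (b := t)).exists_bound_of_continuousOn hucont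
  have hK' : ∀ s ∈ Set.Icc (0:ℝ) t, |1 - ((V s + P s) + f s)| ≤ 1 + K := by
    intro s hs
    have := hK s hs
    rw [Real.norm_eq_abs] at this
    calc |1 - ((V s + P s) + f s)| ≤ |(1:ℝ)| + |(V s + P s) + f s| := abs_sub _ _
      _ ≤ 1 + K := by rw [abs_one]; linarith
  have key : ∀ s ∈ Set.Icc (0:ℝ) t, ‖g s‖ ≤ gronwallBound 0 (1 + K) 0 (s - 0) := by
    apply norm_le_gronwallBound_of_norm_deriv_right_le (f' := fun s => g s * (1 - ((V s + P s) + f s))) hgc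
    · intro s hs
      have hds : HasDerivAt g (((V s + P s) - (V s + P s)^2) - (f s - (f s)^2)) s :=
        (part1 s hs.1).sub (hfderiv s hs.1)
      have : ((V s + P s) - (V s + P s)^2) - (f s - (f s)^2)
          = g s * (1 - ((V s + P s) + f s)) := by simp only [hg]; ring
      rw [this] at hds
      exact hds.hasDerivWithinAt
    · simp [hg, hf0]
    · intro s hs
      have hs' : s ∈ Set.Icc (0:ℝ) t := ⟨hs.1, le_of_lt hs.2⟩
      rw [Real.norm_eq_abs, Real.norm_eq_abs, abs_mul, add_zero]
      calc |g s| * |1 - ((V s + P s) + f s)| ≤ |g s| * (1 + K) :=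
            mul_le_mul_of_nonneg_left (hK' s hs') (abs_nonneg _)
        _ = (1 + K) * |g s| := mul_comm _ _
  have := key t ⟨ht, le_refl t⟩
  rw [gronwallBound_ε0_δ0, Real.norm_eq_abs, abs_nonpos_iff] at this
  have : V t + P t = f t := by simpa [hg, sub_eq_zero] using this
  show V t + P t = _
  rw [this, hf, ← hc₀, one_div]
end
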